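/- Let Q be a divisible commutative quantale and a ≤ b in Q. Then the map x ↦ a ⊗_b x from [⊥, b] to [⊥, a] preserves the slice multiplication: for all x, y ≤ b, a ⊗_b (x ⊗_b y) = (a ⊗_b x) ⊗_a (a ⊗_b y), where u ⊗_c v := c ⊗ (c ⧵ u) ⊗ (c ⧵ v). -/
import Mathlib

/-- Residuation in a quantale: `a ⧵ b = sSup {c | a * c ≤ b}`. -/
def res {Q : Type*} [Mul Q] [CompleteLattice Q] (a b : Q) : Q := sSup {c | a * c ≤ b}

/-- The smooth slice multiplication on `[⊥, c]`: `u ⊗_c v = c * (c ⧵ u) * (c ⧵ v)`. -/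
def smul {Q : Type*} [Mul Q] [CompleteLattice Q] (c u v : Q) : Q := c * res c u * res c v

section aux
variable {Q : Type*} [CommSemigroup Q] [CompleteLattice Q] [IsQuantale Q]

lemma mul_res_le (b x : Q) : b * res b x ≤ x := by
  rw [res, mul_sSup_distrib]
  exact iSup₂_le fun c hc => hc

lemma mul_res_eq (hdiv : ∀ a b : Q, a ≤ b → ∃ c, a = b * c) {b x : Q} (hx : x ≤ b) :
    b * res b x = x := by
  refine le_antisymm (mul_res_le b x) ?_
  obtain ⟨c, hc⟩ := hdiv x b hx
  calc x = b * c := hc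
    _ ≤ b * res b x := mul_le_mul_right (le_sSup (by simp [Set.mem_setOf_eq, ← hc])) b

end aux

/-- In a divisible commutative quantale, for `a ≤ b` the map `x ↦ a ⊗_b x` from
`[⊥, b]` to `[⊥, a]` preserves the slice multiplication. -/
theorem smooth_slice_map_mul {Q : Type*} [CommSemigroup Q] [CompleteLattice Q] [IsQuantale Q]
    (hdiv : ∀ a b : Q, a ≤ b → ∃ c, a = b * c)
    {a b : Q} (hab : a ≤ b) :
    ∀ x y : Q, x ≤ b → y ≤ b →
      smul b a (smul b x y) = smul a (smul b a x) (smul b a y) := by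
  intro x y hx hy
  obtain ⟨ra, hra⟩ : ∃ r, res b a = r := ⟨_, rfl⟩
  obtain ⟨rx, hrx⟩ : ∃ r, res b x = r := ⟨_, rfl⟩
  obtain ⟨ry, hry⟩ : ∃ r, res b y = r := ⟨_, rfl⟩
  have ka : b * ra = a := by rw [← hra]; exact mul_res_eq hdiv hab
  have kx : b * rx = x := by rw [← hrx]; exact mul_res_eq hdiv hx
  have ky : b * ry = y := by rw [← hry]; exact mul_res_eq hdiv hy
  have hs : smul b x y = b * rx * ry := by rw [smul, hrx, hry]
  have hsb : smul b x y ≤ b := by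
    calc smul b x y = x * ry := by rw [hs, kx]
      _ ≤ b * ry := mul_le_mul_left hx _
      _ = y := ky
      _ ≤ b := hy
  have ks : b * res b (smul b x y) = smul b x y := mul_res_eq hdiv hsb
  have hu : smul b a x = b * ra * rx := by rw [smul, hra, hrx]
  have hv : smul b a y = b * ra * ry := by rw [smul, hra, hry]
  have hua : smul b a x ≤ a := by
    calc smul b a x = ra * (b * rx) := by rw [hu]; ac_rfl
      _ = ra * x := by rw [kx]
      _ ≤ ra * b := mul_le_mul_right hx _
      _ = b * ra := mul_comm _ _
      _ = a := ka
  have hva : smul b a y ≤ a := by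
    calc smul b a y = ra * (b * ry) := by rw [hv]; ac_rfl
      _ = ra * y := by rw [ky]
      _ ≤ ra * b := mul_le_mul_right hy _
      _ = b * ra := mul_comm _ _
      _ = a := ka
  have ku : a * res a (smul b a x) = smul b a x := mul_res_eq hdiv hua
  have kv : a * res a (smul b a y) = smul b a y := mul_res_eq hdiv hva
  calc smul b a (smul b x y)
      = b * ra * res b (smul b x y) := by rw [smul, hra]
    _ = ra * (b * res b (smul b x y)) := by ac_rfl
    _ = ra * smul b x y := by rw [ks]
    _ = ra * (b * rx * ry) := by rw [hs]
    _ = rx * ((b * ra) * ry) := by ac_rfl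
    _ = rx * (a * ry) := by rw [ka]
    _ = ry * (a * rx) := by ac_rfl
    _ = ry * ((b * ra) * rx) := by rw [ka]
    _ = ry * smul b a x := by rw [hu]
    _ = ry * (a * res a (smul b a x)) := by rw [ku]
    _ = res a (smul b a x) * ((b * ra) * ry) := by rw [ka]; ac_rfl
    _ = res a (smul b a x) * smul b a y := by rw [hv]
    _ = res a (smul b a x) * (a * res a (smul b a y)) := by rw [kv]
    _ = a * res a (smul b a x) * res a (smul b a y) := by ac_rfl
    _ = smul a (smul b a x) (smul b a y) := rfl
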